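/- Suppose z : [0,∞) → ℝ is differentiable and satisfies z'(t) = -z(t)³(θ_1 z(t) - θ_2)e^{-θ_3 z(t)} for all t ≥ 0 (the case τ = 0). Define ξ_1(t) = -∫₀ᵗ z(s)⁴ ds and ξ_2(t) = ∫₀ᵗ z(s)³ ds. Then for all t ≥ 0: e^{θ_3 z(0)} z'(t) + θ_1 θ_3 ξ_1(t) z'(t) + θ_2 θ_3 ξ_2(t) z'(t) + θ_1 z(t)⁴ - θ_2 z(t)³ = 0. -/

import Mathlib

open Real in
theorem key_identity (θ1 θ2 θ3 : ℝ) (hθ3 : 0 < θ3) (z : ℝ → ℝ)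
    (hz : ∀ t ≥ 0, HasDerivAt z (-(z t) ^ 3 * (θ1 * z t - θ2) * exp (-θ3 * z t)) t)
    (ξ1 ξ2 : ℝ → ℝ)
    (hξ1 : ∀ t, ξ1 t = -∫ s in (0:ℝ)..t, (z s) ^ 4)
    (hξ2 : ∀ t, ξ2 t = ∫ s in (0:ℝ)..t, (z s) ^ 3) :
    ∀ t ≥ 0,
      exp (θ3 * z 0) * deriv z t + θ1 * θ3 * ξ1 t * deriv z t
        + θ2 * θ3 * ξ2 t * deriv z t + θ1 * (z t) ^ 4 - θ2 * (z t) ^ 3 = 0 := by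
  intro t ht
  have huIcc : Set.uIcc (0:ℝ) t = Set.Icc 0 t := Set.uIcc_of_le ht
  have hmem : ∀ s ∈ Set.uIcc (0:ℝ) t, 0 ≤ s := by
    intro s hs; rw [huIcc] at hs; exact hs.1
  have hcont : ContinuousOn z (Set.uIcc (0:ℝ) t) := fun s hs =>
    ((hz s (hmem s hs)).continuousAt).continuousWithinAt
  have hexp : ∀ s : ℝ, exp (θ3 * z s) * exp (-θ3 * z s) = 1 := by
    intro s; rw [← Real.exp_add]; ring_nf; exact Real.exp_zero
  have hderiv : ∀ s ∈ Set.uIcc (0:ℝ) t,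
      HasDerivAt (fun u => exp (θ3 * z u)) (θ3 * (-(z s) ^ 3 * (θ1 * z s - θ2))) s := by
    intro s hs
    have h1 := (hz s (hmem s hs)).const_mul θ3
    have h2 := (Real.hasDerivAt_exp (θ3 * z s)).comp s h1
    refine h2.congr_deriv (Eq.symm ?_)
    linear_combination (-(θ3 * (-(z s) ^ 3 * (θ1 * z s - θ2)))) * hexp s
  have hcont2 : ContinuousOn (fun s => θ3 * (-(z s) ^ 3 * (θ1 * z s - θ2)))
      (Set.uIcc (0:ℝ) t) :=
    continuousOn_const.mul ((hcont.pow 3).neg.mul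
      ((continuousOn_const.mul hcont).sub continuousOn_const))
  have hint := intervalIntegral.integral_eq_sub_of_hasDerivAt hderiv
    hcont2.intervalIntegrable
  have hz4 : IntervalIntegrable (fun s => (z s) ^ 4) MeasureTheory.volume 0 t :=
    (hcont.pow 4).intervalIntegrable
  have hz3 : IntervalIntegrable (fun s => (z s) ^ 3) MeasureTheory.volume 0 t :=
    (hcont.pow 3).intervalIntegrable
  have hsplit : (∫ s in (0:ℝ)..t, θ3 * (-(z s) ^ 3 * (θ1 * z s - θ2)))
      = -(θ1 * θ3) * (∫ s in (0:ℝ)..t, (z s) ^ 4)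
        + (θ2 * θ3) * (∫ s in (0:ℝ)..t, (z s) ^ 3) := by
    rw [← intervalIntegral.integral_const_mul, ← intervalIntegral.integral_const_mul,
      ← intervalIntegral.integral_add (hz4.const_mul _) (hz3.const_mul _)]
    exact intervalIntegral.integral_congr (fun s _ => by ring)
  have hkey : exp (θ3 * z t) = exp (θ3 * z 0) + θ1 * θ3 * ξ1 t + θ2 * θ3 * ξ2 t := by
    rw [hξ1, hξ2]
    have := hint
    rw [hsplit] at this
    linarith [this]
  rw [(hz t ht).deriv]
  linear_combination (-(z t) ^ 3 * (θ1 * z t - θ2) * exp (-θ3 * z t)) * hkey.symm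
    + (-(z t) ^ 3 * (θ1 * z t - θ2)) * hexp t
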